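/- Every non-repetitive simplex-wise zigzag filtration F: ∅ = K_0 ↔ K_1 ↔ ⋯ ↔ K_m = ∅ can be transformed into an up-down filtration by a finite sequence of inward switches, where each inward switch replaces a consecutive pair (delete τ, then add σ) with (add σ, then delete τ); equivalently, the sequence of operations of F, viewed as a word in additions and deletions, can be sorted so that all additions precede all deletions by adjacent transpositions that each swap a deletion immediately followed by an addition. -/

import Mathlib

/-- An operation in a simplex-wise zigzag filtration: `(true, σ)` is the addition
of the simplex `σ`, and `(false, σ)` is its deletion. -/
abbrev Op (V : Type) := Bool × Finset V

/-- A word of operations is non-repetitive if no simplex is added again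
after having been deleted. -/
def NonRepetitive {V : Type} (ops : List (Op V)) : Prop :=
  ∀ i j : Fin ops.length, (i : ℕ) < (j : ℕ) →
    ∀ σ : Finset V, ops.get i = (false, σ) → ops.get j ≠ (true, σ)

/-- A word of operations is up-down if all additions precede all deletions. -/
def IsUpDown {V : Type} (ops : List (Op V)) : Prop :=
  ∀ i j : Fin ops.length, (i : ℕ) < (j : ℕ) →
    (ops.get i).1 = false → (ops.get j).1 = false

/-- One inward switch (adjacent transposition): replace a consecutive pair
(delete `τ`, then add `σ`) by (add `σ`, then delete `τ`);
this is valid only when `σ ≠ τ`. -/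
def InwardSwitch {V : Type} (l l' : List (Op V)) : Prop :=
  ∃ (pre suf : List (Op V)) (σ τ : Finset V), σ ≠ τ ∧
    l = pre ++ (false, τ) :: (true, σ) :: suf ∧
    l' = pre ++ (true, σ) :: (false, τ) :: suf

namespace ZigzagAux

variable {V : Type}

def R (a b : Op V) : Prop := ∀ σ : Finset V, a = (false, σ) → b ≠ (true, σ)

def S (a b : Op V) : Prop := a.1 = false → b.1 = false

lemma nonrep_iff (ops : List (Op V)) : NonRepetitive ops ↔ ops.Pairwise R := by
  rw [List.pairwise_iff_get]; exact Iff.rfl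

lemma updown_iff (ops : List (Op V)) : IsUpDown ops ↔ ops.Pairwise S := by
  rw [List.pairwise_iff_get]; exact Iff.rfl

lemma R_true (σ : Finset V) (b : Op V) : R (true, σ) b := by
  intro σ' h; simp at h

lemma switch_nonrep {l l' : List (Op V)} (hs : InwardSwitch l l')
    (h : NonRepetitive l) : NonRepetitive l' := by
  obtain ⟨pre, suf, σ, τ, _, hl, hl'⟩ := hs
  rw [nonrep_iff] at h ⊢
  subst hl hl'
  rw [List.pairwise_append] at h ⊢
  obtain ⟨hpre, hrest, hcross⟩ := h
  rw [List.pairwise_cons, List.pairwise_cons] at hrest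
  obtain ⟨h1, h2, h3⟩ := hrest
  refine ⟨hpre, ?_, ?_⟩
  · rw [List.pairwise_cons, List.pairwise_cons]
    refine ⟨?_, ?_, h3⟩
    · intro b hb
      rcases List.mem_cons.mp hb with rfl | hb
      · exact R_true σ _
      · exact R_true σ b
    · intro b hb
      exact h1 b (List.mem_cons_of_mem _ hb)
  · intro a ha b hb
    apply hcross a ha
    simp only [List.mem_cons] at hb ⊢
    tauto

lemma switch_cons {a : Op V} {l l' : List (Op V)} (hs : InwardSwitch l l') :
    InwardSwitch (a :: l) (a :: l') := by
  obtain ⟨pre, suf, σ, τ, hne, hl, hl'⟩ := hs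
  exact ⟨a :: pre, suf, σ, τ, hne, by simp [hl], by simp [hl']⟩

lemma rtg_cons {a : Op V} {l l' : List (Op V)}
    (h : Relation.ReflTransGen InwardSwitch l l') :
    Relation.ReflTransGen InwardSwitch (a :: l) (a :: l') := by
  induction h with
  | refl => exact .refl
  | tail _ hstep ih => exact ih.tail (switch_cons hstep)

lemma rtg_nonrep {l l' : List (Op V)}
    (h : Relation.ReflTransGen InwardSwitch l l') (hn : NonRepetitive l) :
    NonRepetitive l' := by
  induction h with
  | refl => exact hn
  | tail _ hstep ih => exact switch_nonrep hstep ih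

lemma bubble (τ : Finset V) : ∀ (adds dels : List (Op V)),
    (∀ a ∈ adds, a.1 = true) → (∀ a ∈ adds, a.2 ≠ τ) →
    Relation.ReflTransGen InwardSwitch
      ((false, τ) :: (adds ++ dels)) (adds ++ (false, τ) :: dels)
  | [], dels, _, _ => .refl
  | a :: adds, dels, h1, h2 => by
      obtain ⟨b, s⟩ := a
      have hb : b = true := h1 (b, s) (by simp)
      subst hb
      have hne : s ≠ τ := h2 (true, s) (by simp)
      have step : InwardSwitch ((false, τ) :: ((true, s) :: adds) ++ dels)
          ((true, s) :: (false, τ) :: (adds ++ dels)) :=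
        ⟨[], adds ++ dels, s, τ, hne, by simp, by simp⟩
      refine Relation.ReflTransGen.head step ?_
      exact rtg_cons (bubble τ adds dels
        (fun x hx => h1 x (List.mem_cons_of_mem _ hx))
        (fun x hx => h2 x (List.mem_cons_of_mem _ hx)))

lemma split_updown : ∀ (l : List (Op V)), l.Pairwise S →
    ∃ adds dels : List (Op V), l = adds ++ dels ∧
      (∀ a ∈ adds, a.1 = true) ∧ (∀ b ∈ dels, b.1 = false)
  | [], _ => ⟨[], [], rfl, by simp, by simp⟩
  | a :: l, h => by
      rw [List.pairwise_cons] at h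
      obtain ⟨ha, hl⟩ := h
      by_cases hb : a.1 = true
      · obtain ⟨adds, dels, rfl, h1, h2⟩ := split_updown l hl
        exact ⟨a :: adds, dels, rfl, by
          intro x hx
          rcases List.mem_cons.mp hx with rfl | hx
          · exact hb
          · exact h1 x hx, h2⟩
      · have hbf : a.1 = false := by simpa using hb
        refine ⟨[], a :: l, rfl, by simp, ?_⟩
        intro x hx
        rcases List.mem_cons.mp hx with rfl | hx
        · exact hbf
        · exact ha x hx hbf

lemma updown_of_split (adds dels : List (Op V))
    (h1 : ∀ a ∈ adds, a.1 = true) (h2 : ∀ b ∈ dels, b.1 = false) :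
    IsUpDown (adds ++ dels) := by
  rw [updown_iff, List.pairwise_append]
  refine ⟨?_, ?_, fun a _ b hb _ => h2 b hb⟩
  · rw [List.pairwise_iff_get]
    intro i j _ hf
    have := h1 _ (adds.get_mem i)
    simp_all
  · rw [List.pairwise_iff_get]
    intro i j _ _
    exact h2 _ (dels.get_mem j)

end ZigzagAux

open ZigzagAux in
/-- Every non-repetitive simplex-wise zigzag filtration, viewed as a word of
additions and deletions, can be sorted into an up-down word (all additions
before all deletions) by a finite sequence of inward switches, each swapping a
deletion immediately followed by an addition (of a different simplex). -/
theorem nonrepetitive_sorts_to_updown {V : Type} (ops : List (Op V))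
    (h : NonRepetitive ops) :
    ∃ ops' : List (Op V), Relation.ReflTransGen InwardSwitch ops ops' ∧ IsUpDown ops' := by
  induction ops with
  | nil =>
      refine ⟨[], .refl, ?_⟩
      intro i
      exact absurd i.2 (by simp)
  | cons a ops ih =>
      have htail : NonRepetitive ops := by
        rw [nonrep_iff] at h ⊢
        exact h.of_cons
      obtain ⟨ops', hrel, hud⟩ := ih htail
      have hrel2 : Relation.ReflTransGen InwardSwitch (a :: ops) (a :: ops') :=
        rtg_cons hrel
      obtain ⟨b, τ⟩ := a
      cases b
      · -- a is a deletion (false, τ)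
        have hnr' : NonRepetitive ((false, τ) :: ops') := rtg_nonrep hrel2 h
        obtain ⟨adds, dels, rfl, h1, h2⟩ :=
          split_updown ops' ((updown_iff _).mp hud)
        have h2' : ∀ x ∈ adds, x.2 ≠ τ := by
          intro x hx
          rw [nonrep_iff, List.pairwise_cons] at hnr'
          have hR := hnr'.1 x (by simp [hx])
          have hxt : x = (true, x.2) := by
            have := h1 x hx
            cases x; simp_all
          intro hcon
          exact hR τ rfl (by rw [hxt, hcon])
        refine ⟨adds ++ (false, τ) :: dels, ?_, ?_⟩
        · exact hrel2.trans (bubble τ adds dels h1 h2')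
        · refine updown_of_split adds ((false, τ) :: dels) h1 ?_
          intro x hx
          rcases List.mem_cons.mp hx with rfl | hx
          · rfl
          · exact h2 x hx
      · -- a is an addition (true, τ)
        refine ⟨(true, τ) :: ops', hrel2, ?_⟩
        rw [updown_iff, List.pairwise_cons]
        exact ⟨fun b _ hf => by simp at hf, (updown_iff _).mp hud⟩
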